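/- Let K be a field of characteristic p > 0 and K(x)/K a simple finite purely inseparable extension with exp[x : K] = l, so that {x^j : 0 ≤ j < p^l} is a K-basis of K(x). For 0 ≤ m < p^l let (d/dx)^{[m]} be the K-linear endomorphism of K(x) with (d/dx)^{[m]}(x^j) = C(j, m)·x^{j−m} (binomial coefficient mod p, with the convention x^{j−m} = 0 if j < m). Then each (d/dx)^{[m]} is a differential operator of order m, and Diff_K K(x) = End_K K(x) is generated as a K(x)-algebra by the operators (d/dx)^{[p^k]} for 0 ≤ k < l. -/

import Mathlib

/-- `D` is a differential operator of order ≤ n over K: all iterated commutators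
`[[⋯[D, a₀], a₁]⋯, aₙ]` with `n + 1` multiplication operators vanish. -/
def IsDiffOpLE (K M : Type*) [CommSemiring K] [CommRing M] [Algebra K M]
    (n : ℕ) (D : M →ₗ[K] M) : Prop :=
  ∀ a : Fin (n + 1) → M,
    (List.ofFn a).foldl
      (fun E c => E ∘ₗ LinearMap.mulLeft K c - LinearMap.mulLeft K c ∘ₗ E) D = 0

/-- The divided-power derivative `(d/dx)^{[m]}`, sending the basis vector `x ^ j` to
`C(j, m) • x ^ (j - m)` (which is `0` when `j < m`, as then `C(j, m) = 0`). -/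
noncomputable def dividedDeriv {K L : Type*} [Field K] [Field L] [Algebra K L]
    {N : ℕ} (b : Module.Basis (Fin N) K L) (x : L) (m : ℕ) : L →ₗ[K] L :=
  b.constr K fun j => (Nat.choose (j : ℕ) m : L) * x ^ ((j : ℕ) - m)

open LinearMap

section Aux

variable {K L : Type*} [Field K] [Field L] [Algebra K L]

variable (K L) in
private def cf : (L →ₗ[K] L) → L → (L →ₗ[K] L) :=
  fun E c => E ∘ₗ LinearMap.mulLeft K c - LinearMap.mulLeft K c ∘ₗ E

private lemma cf_zero (c : L) : cf K L 0 c = 0 := by simp [cf]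

private lemma cf_add (E F : L →ₗ[K] L) (c : L) :
    cf K L (E + F) c = cf K L E c + cf K L F c := by
  simp only [cf, add_comp, comp_add]; abel

private lemma cf_smul (k : K) (E : L →ₗ[K] L) (c : L) :
    cf K L (k • E) c = k • cf K L E c := by
  simp only [cf, smul_comp, comp_smul, smul_sub]

private lemma cf_left (u : L) (E : L →ₗ[K] L) (c : L) :
    cf K L (mulLeft K u ∘ₗ E) c = mulLeft K u ∘ₗ cf K L E c := by
  ext y
  simp only [cf, LinearMap.sub_apply, comp_apply, mulLeft_apply]
  ring

private lemma cf_right (u : L) (E : L →ₗ[K] L) (c : L) :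
    cf K L (E ∘ₗ mulLeft K u) c = cf K L E c ∘ₗ mulLeft K u := by
  ext y
  simp only [cf, LinearMap.sub_apply, comp_apply, mulLeft_apply]
  rw [mul_left_comm]

private lemma foldl_cf_zero (lst : List L) : lst.foldl (cf K L) 0 = 0 := by
  induction lst with
  | nil => rfl
  | cons c t ih => rw [List.foldl_cons, cf_zero]; exact ih

private lemma foldl_cf_add (lst : List L) :
    ∀ E F : L →ₗ[K] L, lst.foldl (cf K L) (E + F)
      = lst.foldl (cf K L) E + lst.foldl (cf K L) F := by
  induction lst with
  | nil => intro E F; rfl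
  | cons c t ih =>
    intro E F
    rw [List.foldl_cons, List.foldl_cons, List.foldl_cons, cf_add, ih]

private lemma foldl_cf_smul (lst : List L) :
    ∀ (k : K) (E : L →ₗ[K] L), lst.foldl (cf K L) (k • E) = k • lst.foldl (cf K L) E := by
  induction lst with
  | nil => intro k E; rfl
  | cons c t ih =>
    intro k E
    rw [List.foldl_cons, List.foldl_cons, cf_smul, ih]

private lemma foldl_cf_left (lst : List L) :
    ∀ (u : L) (E : L →ₗ[K] L), lst.foldl (cf K L) (mulLeft K u ∘ₗ E)
      = mulLeft K u ∘ₗ lst.foldl (cf K L) E := by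
  induction lst with
  | nil => intro u E; rfl
  | cons c t ih =>
    intro u E
    rw [List.foldl_cons, List.foldl_cons, cf_left, ih]

private lemma foldl_cf_right (lst : List L) :
    ∀ (u : L) (E : L →ₗ[K] L), lst.foldl (cf K L) (E ∘ₗ mulLeft K u)
      = lst.foldl (cf K L) E ∘ₗ mulLeft K u := by
  induction lst with
  | nil => intro u E; rfl
  | cons c t ih =>
    intro u E
    rw [List.foldl_cons, List.foldl_cons, cf_right, ih]

private lemma foldl_cf_span (lst : List L) {E : L →ₗ[K] L}
    (hE : lst.foldl (cf K L) E = 0) {F : L →ₗ[K] L}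
    (hF : F ∈ Submodule.span K {G | ∃ u v : L, G = mulLeft K u ∘ₗ E ∘ₗ mulLeft K v}) :
    lst.foldl (cf K L) F = 0 := by
  induction hF using Submodule.span_induction with
  | mem G hG =>
    obtain ⟨u, v, rfl⟩ := hG
    rw [foldl_cf_left, foldl_cf_right, hE, zero_comp, comp_zero]
  | zero => exact foldl_cf_zero _
  | add a b _ _ ha hb => rw [foldl_cf_add, ha, hb, add_zero]
  | smul k a _ ha => rw [foldl_cf_smul, ha, smul_zero]

private lemma cf_mem_span (x : L) (hx : Algebra.adjoin K {x} = ⊤) (E : L →ₗ[K] L) (a : L) :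
    cf K L E a ∈ Submodule.span K
      {G | ∃ u v : L, G = mulLeft K u ∘ₗ cf K L E x ∘ₗ mulLeft K v} := by
  have closed_left : ∀ (w : L) (F : L →ₗ[K] L),
      F ∈ Submodule.span K {G | ∃ u v : L, G = mulLeft K u ∘ₗ cf K L E x ∘ₗ mulLeft K v} →
      mulLeft K w ∘ₗ F ∈ Submodule.span K
        {G | ∃ u v : L, G = mulLeft K u ∘ₗ cf K L E x ∘ₗ mulLeft K v} := by
    intro w F hF
    induction hF using Submodule.span_induction with
    | mem G hG =>
      obtain ⟨u, v, rfl⟩ := hG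
      refine Submodule.subset_span ⟨w * u, v, ?_⟩
      ext y; simp [mul_assoc]
    | zero => rw [comp_zero]; exact Submodule.zero_mem _
    | add a b _ _ ha hb => rw [comp_add]; exact Submodule.add_mem _ ha hb
    | smul k a _ ha => rw [comp_smul]; exact Submodule.smul_mem _ _ ha
  have closed_right : ∀ (w : L) (F : L →ₗ[K] L),
      F ∈ Submodule.span K {G | ∃ u v : L, G = mulLeft K u ∘ₗ cf K L E x ∘ₗ mulLeft K v} →
      F ∘ₗ mulLeft K w ∈ Submodule.span K
        {G | ∃ u v : L, G = mulLeft K u ∘ₗ cf K L E x ∘ₗ mulLeft K v} := by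
    intro w F hF
    induction hF using Submodule.span_induction with
    | mem G hG =>
      obtain ⟨u, v, rfl⟩ := hG
      refine Submodule.subset_span ⟨u, v * w, ?_⟩
      ext y; simp [mul_assoc]
    | zero => rw [zero_comp]; exact Submodule.zero_mem _
    | add a b _ _ ha hb => rw [add_comp]; exact Submodule.add_mem _ ha hb
    | smul k a _ ha => rw [smul_comp]; exact Submodule.smul_mem _ _ ha
  have ha : a ∈ Algebra.adjoin K {x} := hx ▸ Algebra.mem_top
  induction ha using Algebra.adjoin_induction with
  | mem y hy =>
    rcases hy with rfl
    exact Submodule.subset_span ⟨1, 1, by rw [mulLeft_one, id_comp, comp_id]⟩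
  | algebraMap c =>
    have h0 : cf K L E (algebraMap K L c) = 0 := by
      ext y
      simp only [cf, LinearMap.sub_apply, comp_apply, mulLeft_apply, LinearMap.zero_apply]
      rw [← Algebra.smul_def, map_smul, Algebra.smul_def, sub_self]
    rw [h0]; exact Submodule.zero_mem _
  | add y z _ _ hy hz =>
    have : cf K L E (y + z) = cf K L E y + cf K L E z := by
      ext w; simp only [cf, LinearMap.sub_apply, comp_apply, mulLeft_apply, LinearMap.add_apply]
      rw [add_mul, map_add]; ring
    rw [this]; exact Submodule.add_mem _ hy hz
  | mul y z _ _ hy hz =>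
    have : cf K L E (y * z) = mulLeft K y ∘ₗ cf K L E z + cf K L E y ∘ₗ mulLeft K z := by
      ext w
      simp only [cf, LinearMap.sub_apply, comp_apply, mulLeft_apply, LinearMap.add_apply, map_sub]
      rw [mul_assoc]
      ring
    rw [this]
    exact Submodule.add_mem _ (closed_left _ _ hz) (closed_right _ _ hy)

private lemma isDiffOpLE_of_iterate (x : L) (hx : Algebra.adjoin K {x} = ⊤)
    (n : ℕ) (E : L →ₗ[K] L) (hE : (fun F => cf K L F x)^[n + 1] E = 0) :
    IsDiffOpLE K L n E := by
  have main : ∀ (n : ℕ) (E : L →ₗ[K] L), (fun F => cf K L F x)^[n] E = 0 →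
      ∀ lst : List L, lst.length = n → lst.foldl (cf K L) E = 0 := by
    intro n
    induction n with
    | zero =>
      intro E hE lst hl
      rw [List.length_eq_zero_iff] at hl
      subst hl
      simpa using hE
    | succ n ih =>
      intro E hE lst hl
      match lst with
      | c :: t =>
        simp only [List.length_cons, Nat.succ.injEq] at hl
        rw [List.foldl_cons]
        have h1 : (fun F => cf K L F x)^[n] (cf K L E x) = 0 := by
          rw [← Function.iterate_succ_apply]; exact hE
        exact foldl_cf_span t (ih _ h1 t hl) (cf_mem_span x hx E c)
  intro a
  exact main (n + 1) E hE _ (by simp)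

private lemma foldl_cf_replicate (x : L) : ∀ (n : ℕ) (E : L →ₗ[K] L),
    (List.replicate n x).foldl (cf K L) E = (fun F => cf K L F x)^[n] E := by
  intro n
  induction n with
  | zero => intro E; rfl
  | succ n ih =>
    intro E
    rw [List.replicate_succ, List.foldl_cons, Function.iterate_succ_apply]
    exact ih _

private lemma iterate_cf (p : ℕ) (hp : p.Prime) [CharP K p] (x : L) (l : ℕ)
    (hl : x ^ p ^ l ∈ (algebraMap K L).range) (E : L →ₗ[K] L) :
    (fun F => cf K L F x)^[p ^ l] E = 0 := by
  haveI : Fact p.Prime := ⟨hp⟩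
  haveI : CharP (Module.End K L) p := charP_of_injective_algebraMap' K p
  haveI : CharP (Module.End K (Module.End K L)) p :=
    charP_of_injective_algebraMap' K p
  set X : Module.End K L := mulLeft K x with hX
  set T : Module.End K (Module.End K L) := mulRight K X - mulLeft K X with hT
  have hcf : (fun F : L →ₗ[K] L => cf K L F x) = ⇑T := by
    funext F
    simp only [hT, hX, cf, LinearMap.sub_apply, mulRight_apply, mulLeft_apply, Module.End.mul_eq_comp]
  rw [hcf, ← Module.End.pow_apply]
  have hTpow : T ^ p ^ l = 0 := by
    obtain ⟨c, hc⟩ := hl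
    have hcomm : Commute (mulRight K X) (mulLeft K X) :=
      (LinearMap.commute_mulLeft_right X X).symm
    rw [hT, sub_pow_char_pow_of_commute (R := Module.End K (Module.End K L)) (p := p) (n := l) (h := hcomm), hX]
    simp only [pow_mulRight, pow_mulLeft]
    rw [← hc]
    ext F y
    simp only [LinearMap.sub_apply, mulRight_apply, mulLeft_apply, Module.End.mul_eq_comp, comp_apply,
      LinearMap.zero_apply, mulLeft_apply]
    rw [← Algebra.smul_def, map_smul, Algebra.smul_def, sub_self]
  rw [hTpow]
  rfl

end Aux

section DD

variable {K L : Type*} [Field K] [Field L] [Algebra K L]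
  {p l : ℕ} (b : Module.Basis (Fin (p ^ l)) K L) (x : L)

private lemma dd_apply (m : ℕ) (j : Fin (p ^ l)) :
    dividedDeriv b x m (b j) = ((j : ℕ).choose m : L) * x ^ ((j : ℕ) - m) :=
  b.constr_basis K _ j

private lemma dd_zero (hb : ∀ j : Fin (p ^ l), b j = x ^ (j : ℕ)) :
    dividedDeriv b x 0 = LinearMap.id := by
  apply b.ext
  intro j
  rw [dd_apply, Nat.choose_zero_right, Nat.cast_one, one_mul, Nat.sub_zero, id_apply, hb]

private lemma choose_identity (j a c : ℕ) :
    j.choose c * (j - c).choose a = (a + c).choose c * j.choose (a + c) := by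
  rcases le_or_gt (a + c) j with h | h
  · have h2 := Nat.choose_mul (n := j) (Nat.le_add_left c a)
    rw [Nat.add_sub_cancel] at h2
    rw [mul_comm ((a + c).choose c)]
    exact h2.symm
  · rw [Nat.choose_eq_zero_of_lt h, mul_zero]
    rcases le_or_gt c j with hc | hc
    · rw [Nat.choose_eq_zero_of_lt (show j - c < a by omega), mul_zero]
    · rw [Nat.choose_eq_zero_of_lt hc, zero_mul]

private lemma dd_comp (hb : ∀ j : Fin (p ^ l), b j = x ^ (j : ℕ)) (a c : ℕ) :
    dividedDeriv b x a ∘ₗ dividedDeriv b x c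
      = ((a + c).choose c) • dividedDeriv b x (a + c) := by
  apply b.ext
  intro j
  have hjc : (j : ℕ) - c < p ^ l := lt_of_le_of_lt (Nat.sub_le _ _) j.isLt
  have hx : x ^ ((j : ℕ) - c) = b ⟨(j : ℕ) - c, hjc⟩ := (hb ⟨(j : ℕ) - c, hjc⟩).symm
  rw [comp_apply, dd_apply, LinearMap.smul_apply, dd_apply, ← nsmul_eq_mul, map_nsmul, hx, dd_apply]
  simp only [nsmul_eq_mul, Nat.cast_mul]
  rw [← mul_assoc, ← mul_assoc, ← Nat.cast_mul, ← Nat.cast_mul, choose_identity,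
    Nat.sub_sub, Nat.add_comm c a]

private lemma dd_step (hp : p.Prime) [CharP K p]
    (hb : ∀ j : Fin (p ^ l), b j = x ^ (j : ℕ))
    (hl : x ^ p ^ l ∈ (algebraMap K L).range)
    (m : ℕ) (hm : m + 1 < p ^ l) :
    cf K L (dividedDeriv b x (m + 1)) x = dividedDeriv b x m := by
  haveI : CharP L p := charP_of_injective_algebraMap (algebraMap K L).injective p
  apply b.ext
  intro j
  have hj := j.isLt
  rw [show cf K L (dividedDeriv b x (m + 1)) x (b j)
      = dividedDeriv b x (m + 1) (x * b j) - x * dividedDeriv b x (m + 1) (b j) from rfl,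
    dd_apply b x (m + 1) j, dd_apply b x m j, hb j]
  rcases lt_or_eq_of_le (Nat.succ_le_of_lt hj) with hj1 | hj1
  · have hxj : x * x ^ (j : ℕ) = b ⟨(j : ℕ) + 1, hj1⟩ := by
      rw [hb ⟨(j : ℕ) + 1, hj1⟩]; exact (pow_succ' x _).symm
    rw [hxj, dd_apply]
    show (((j : ℕ) + 1).choose (m + 1) : L) * x ^ ((j : ℕ) + 1 - (m + 1))
        - x * (((j : ℕ).choose (m + 1) : L) * x ^ ((j : ℕ) - (m + 1)))
        = ((j : ℕ).choose m : L) * x ^ ((j : ℕ) - m)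
    rcases lt_trichotomy (j : ℕ) m with h | h | h
    · rw [Nat.choose_eq_zero_of_lt (by omega), Nat.choose_eq_zero_of_lt (by omega),
        Nat.choose_eq_zero_of_lt (by omega)]
      simp
    · rw [h, Nat.choose_self, Nat.choose_eq_zero_of_lt (by omega), Nat.choose_self]
      simp
    · have e1 : (j : ℕ) + 1 - (m + 1) = (j : ℕ) - m := by omega
      have e2 : x * x ^ ((j : ℕ) - (m + 1)) = x ^ ((j : ℕ) - m) := by
        rw [← pow_succ']
        congr 1
        omega
      rw [e1, ← mul_assoc, mul_comm x, mul_assoc, e2, Nat.choose_succ_succ]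
      push_cast
      ring
  · obtain ⟨c, hc⟩ := hl
    have hpos : 0 < p ^ l := pow_pos hp.pos l
    have hb0 : (1 : L) = b ⟨0, hpos⟩ := by rw [hb ⟨0, hpos⟩]; exact (pow_zero x).symm
    have hxj : x * x ^ (j : ℕ) = algebraMap K L c := by
      rw [← pow_succ' x, show (j : ℕ) + 1 = p ^ l from hj1, hc]
    have hE0 : dividedDeriv b x (m + 1) (algebraMap K L c) = 0 := by
      rw [Algebra.algebraMap_eq_smul_one, map_smul, hb0, dd_apply]
      show c • (((0 : ℕ).choose (m + 1) : L) * x ^ (0 - (m + 1))) = 0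
      rw [Nat.choose_eq_zero_of_lt (Nat.succ_pos m)]
      simp
    rw [hxj, hE0, zero_sub]
    have hjm : m + 1 ≤ (j : ℕ) := by omega
    have e2 : x * x ^ ((j : ℕ) - (m + 1)) = x ^ ((j : ℕ) - m) := by
      rw [← pow_succ']
      congr 1
      omega
    rw [← mul_assoc, mul_comm x, mul_assoc, e2]
    have hdvd : (p : ℕ) ∣ (p ^ l).choose (m + 1) :=
      Nat.Prime.dvd_choose_pow hp (Nat.succ_ne_zero m) (by omega)
    have hcast : ((((j : ℕ) + 1).choose (m + 1) : ℕ) : L) = 0 := by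
      rw [show (j : ℕ) + 1 = p ^ l from hj1]
      exact (CharP.cast_eq_zero_iff L p _).2 hdvd
    rw [Nat.choose_succ_succ] at hcast
    push_cast at hcast ⊢
    linear_combination (-(x ^ ((j : ℕ) - m))) * hcast

private lemma dd_iter (hp : p.Prime) [CharP K p]
    (hb : ∀ j : Fin (p ^ l), b j = x ^ (j : ℕ))
    (hl : x ^ p ^ l ∈ (algebraMap K L).range)
    (m : ℕ) (hm : m < p ^ l) :
    ∀ k, k ≤ m →
      (fun F => cf K L F x)^[k] (dividedDeriv b x m) = dividedDeriv b x (m - k) := by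
  intro k
  induction k with
  | zero => intro _; simp
  | succ k ih =>
    intro hk
    rw [Function.iterate_succ_apply', ih (by omega)]
    have e : m - k = (m - (k + 1)) + 1 := by omega
    rw [e, dd_step b x hp hb hl _ (by omega)]

private lemma cast_choose_pow (p : ℕ) (hp : p.Prime) :
    ∀ (k m : ℕ), ((m.choose (p ^ k) : ℕ) : ZMod p) = ((m / p ^ k : ℕ) : ZMod p) := by
  haveI : Fact p.Prime := ⟨hp⟩
  intro k
  induction k with
  | zero => intro m; simp [Nat.choose_one_right]
  | succ k ih =>
    intro m
    have h := Choose.choose_modEq_choose_mod_mul_choose_div_nat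
      (n := m) (k := p ^ (k + 1)) (p := p)
    have h1 : p ^ (k + 1) % p = 0 := by
      rw [pow_succ', Nat.mul_mod_right]
    have h2 : p ^ (k + 1) / p = p ^ k := by
      rw [pow_succ', Nat.mul_div_cancel_left _ hp.pos]
    rw [h1, h2, Nat.choose_zero_right, one_mul] at h
    rw [← ZMod.natCast_eq_natCast_iff] at h
    rw [h, ih, Nat.div_div_eq_div_mul, ← pow_succ']

private lemma dd_mem_adjoin (hp : p.Prime) [CharP K p]
    (hb : ∀ j : Fin (p ^ l), b j = x ^ (j : ℕ)) :
    ∀ m : ℕ, m < p ^ l →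
    (dividedDeriv b x m : Module.End K L) ∈ Algebra.adjoin K
      ((Set.range fun a : L => (LinearMap.mulLeft K a : Module.End K L)) ∪
        (Set.range fun k : Fin l => (dividedDeriv b x (p ^ (k : ℕ)) : Module.End K L))) := by
  intro m
  induction m using Nat.strong_induction_on with
  | _ m ih =>
    intro hm
    rcases Nat.eq_zero_or_pos m with rfl | hpos
    · rw [show (dividedDeriv b x 0 : Module.End K L) = 1 from dd_zero b x hb]
      exact one_mem _
    · set k := Nat.log p m with hk
      have hk1 : p ^ k ≤ m := Nat.pow_log_le_self p hpos.ne'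
      have hk2 : m < p ^ (k + 1) := Nat.lt_pow_succ_log_self hp.one_lt m
      have hkl : k < l := by
        by_contra h
        push_neg at h
        exact absurd hm (not_lt.2 (le_trans (Nat.pow_le_pow_right hp.pos h) hk1))
      have hppos : 0 < p ^ k := pow_pos hp.pos k
      have hdiv1 : 1 ≤ m / p ^ k := (Nat.one_le_div_iff hppos).2 hk1
      have hdiv2 : m / p ^ k < p := by
        rw [Nat.div_lt_iff_lt_mul hppos]
        calc m < p ^ (k + 1) := hk2
          _ = p * p ^ k := pow_succ' p k
      have hnd : ¬ (p ∣ m.choose (p ^ k)) := by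
        intro hdvd
        have h0 : ((m.choose (p ^ k) : ℕ) : ZMod p) = 0 :=
          (ZMod.natCast_eq_zero_iff _ _).2 hdvd
        rw [cast_choose_pow p hp] at h0
        have h3 := (ZMod.natCast_eq_zero_iff _ _).1 h0
        have h4 := Nat.le_of_dvd (by omega) h3
        omega
      have hcK : ((m.choose (p ^ k) : ℕ) : K) ≠ 0 := by
        intro h0
        exact hnd ((CharP.cast_eq_zero_iff K p _).1 h0)
      have hcomp := dd_comp b x hb (p ^ k) (m - p ^ k)
      rw [Nat.add_sub_cancel' hk1, Nat.choose_symm hk1] at hcomp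
      have hEq : dividedDeriv b x m = ((m.choose (p ^ k) : ℕ) : K)⁻¹ •
          (dividedDeriv b x (p ^ k) ∘ₗ dividedDeriv b x (m - p ^ k)) := by
        rw [hcomp, ← Nat.cast_smul_eq_nsmul K, inv_smul_smul₀ hcK]
      rw [hEq]
      refine Subalgebra.smul_mem _ ?_ _
      have h1 : (dividedDeriv b x (p ^ k) : Module.End K L) ∈ Algebra.adjoin K
          ((Set.range fun a : L => (LinearMap.mulLeft K a : Module.End K L)) ∪
            (Set.range fun k : Fin l => (dividedDeriv b x (p ^ (k : ℕ)) : Module.End K L))) :=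
        Algebra.subset_adjoin (Or.inr ⟨⟨k, hkl⟩, rfl⟩)
      have h2 := ih (m - p ^ k) (by omega) (by omega)
      rw [← Module.End.mul_eq_comp]
      exact mul_mem h1 h2

private lemma end_eq_sum [FiniteDimensional K L]
    (hb : ∀ j : Fin (p ^ l), b j = x ^ (j : ℕ)) (E : Module.End K L) :
    ∃ u : Fin (p ^ l) → L,
      E = ∑ m : Fin (p ^ l), mulLeft K (u m) ∘ₗ dividedDeriv b x (m : ℕ) := by
  let Ψ : (Fin (p ^ l) → L) →ₗ[K] Module.End K L :=
    { toFun := fun u => ∑ m : Fin (p ^ l), mulLeft K (u m) ∘ₗ dividedDeriv b x (m : ℕ)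
      map_add' := by
        intro u v
        rw [← Finset.sum_add_distrib]
        refine Finset.sum_congr rfl fun m _ => ?_
        have hml : mulLeft K (u m + v m) = mulLeft K (u m) + mulLeft K (v m) := by
          ext y; simp [add_mul]
        show mulLeft K (u m + v m) ∘ₗ dividedDeriv b x (m : ℕ) = _
        rw [hml, add_comp]
      map_smul' := by
        intro k u
        rw [Finset.smul_sum]
        refine Finset.sum_congr rfl fun m _ => ?_
        have hml : mulLeft K ((k • u) m) = k • mulLeft K (u m) := by
          ext y; simp [smul_mul_assoc]
        rw [hml, smul_comp, RingHom.id_apply] }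
  have hzero : ∀ u, Ψ u = 0 → u = 0 := by
    intro u hu
    have key : ∀ (n : ℕ) (j : Fin (p ^ l)), (j : ℕ) = n → u j = 0 := by
      intro n
      induction n using Nat.strong_induction_on with
      | _ n ihn =>
        intro j hj
        have h0 : (∑ m : Fin (p ^ l),
            (mulLeft K (u m) ∘ₗ dividedDeriv b x (m : ℕ)) (b j)) = 0 := by
          have h0' := congrArg (fun F : Module.End K L => F (b j)) hu
          simpa only [Ψ, LinearMap.coe_mk, AddHom.coe_mk, LinearMap.sum_apply,
            LinearMap.zero_apply] using h0'
        have hterm : ∀ m : Fin (p ^ l), m ∈ Finset.univ → m ≠ j →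
            (mulLeft K (u m) ∘ₗ dividedDeriv b x (m : ℕ)) (b j) = 0 := by
          intro m _ hmj
          rw [comp_apply, dd_apply, mulLeft_apply]
          rcases lt_trichotomy ((m : ℕ)) ((j : ℕ)) with h | h | h
          · rw [ihn (m : ℕ) (by omega) m rfl, zero_mul]
          · exact absurd (Fin.ext h) hmj
          · rw [Nat.choose_eq_zero_of_lt h]
            simp
        rw [Finset.sum_eq_single_of_mem j (Finset.mem_univ j) hterm, comp_apply, dd_apply,
          mulLeft_apply, Nat.choose_self, Nat.sub_self, pow_zero, Nat.cast_one, one_mul,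
          mul_one] at h0
        exact h0
    funext j
    exact key (j : ℕ) j rfl
  have hinj : Function.Injective Ψ := LinearMap.ker_eq_bot.1 (LinearMap.ker_eq_bot'.2 hzero)
  have hdim : Module.finrank K (Fin (p ^ l) → L) = Module.finrank K (Module.End K L) := by
    rw [Module.finrank_linearMap, Module.finrank_pi_fintype,
      Finset.sum_const, Finset.card_univ, Fintype.card_fin, smul_eq_mul,
      Module.finrank_eq_card_basis b, Fintype.card_fin]
  have hsurj : Function.Surjective Ψ :=
    (LinearMap.injective_iff_surjective_of_finrank_eq_finrank hdim).1 hinj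
  obtain ⟨u, hu⟩ := hsurj E
  exact ⟨u, hu.symm⟩

end DD

theorem simple_purelyInseparable_diffOps
    (K L : Type*) [Field K] [Field L] [Algebra K L] [FiniteDimensional K L]
    (p : ℕ) (hp : p.Prime) [CharP K p]
    (x : L) (hgen : IntermediateField.adjoin K {x} = ⊤)
    (l : ℕ) (hl : x ^ p ^ l ∈ (algebraMap K L).range)
    (hlmin : ∀ m : ℕ, m < l → x ^ p ^ m ∉ (algebraMap K L).range)
    (b : Module.Basis (Fin (p ^ l)) K L) (hb : ∀ j : Fin (p ^ l), b j = x ^ (j : ℕ)) :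
    (∀ m : ℕ, m < p ^ l →
      IsDiffOpLE K L m (dividedDeriv b x m) ∧
        ∀ m' : ℕ, IsDiffOpLE K L m' (dividedDeriv b x m) → m ≤ m') ∧
    (∀ D : L →ₗ[K] L, ∃ m : ℕ, IsDiffOpLE K L m D) ∧
    Algebra.adjoin K
        ((Set.range fun a : L => (LinearMap.mulLeft K a : Module.End K L)) ∪
          (Set.range fun k : Fin l => (dividedDeriv b x (p ^ (k : ℕ)) : Module.End K L))) =
      (⊤ : Subalgebra K (Module.End K L)) := by
  have hadj : Algebra.adjoin K {x} = ⊤ := by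
    have h1 := IntermediateField.adjoin_simple_toSubalgebra_of_isAlgebraic
      (F := K) (α := x) (IsAlgebraic.of_finite K x)
    rw [hgen, IntermediateField.top_toSubalgebra] at h1
    exact h1.symm
  refine ⟨?_, ?_, ?_⟩
  · intro m hm
    constructor
    · refine isDiffOpLE_of_iterate x hadj m _ ?_
      rw [Function.iterate_succ_apply', dd_iter b x hp hb hl m hm m le_rfl, Nat.sub_self,
        dd_zero b x hb]
      show LinearMap.id ∘ₗ LinearMap.mulLeft K x - LinearMap.mulLeft K x ∘ₗ LinearMap.id = 0
      rw [LinearMap.id_comp, LinearMap.comp_id, sub_self]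
    · intro m' hm'
      by_contra hlt
      push_neg at hlt
      have h1 : (List.ofFn fun _ : Fin (m' + 1) => x).foldl (cf K L)
          (dividedDeriv b x m) = 0 := hm' (fun _ => x)
      rw [List.ofFn_const, foldl_cf_replicate,
        dd_iter b x hp hb hl m hm (m' + 1) (by omega)] at h1
      have h2 := congrArg
        (fun F : L →ₗ[K] L => F (b ⟨m - (m' + 1), by omega⟩)) h1
      simp only [LinearMap.zero_apply] at h2
      rw [dd_apply] at h2
      have h3 : ((m - (m' + 1)).choose (m - (m' + 1)) : L)
          * x ^ ((m - (m' + 1)) - (m - (m' + 1))) = 0 := h2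
      rw [Nat.choose_self, Nat.sub_self, pow_zero, Nat.cast_one, one_mul] at h3
      exact one_ne_zero h3
  · intro D
    refine ⟨p ^ l - 1, isDiffOpLE_of_iterate x hadj _ D ?_⟩
    rw [Nat.sub_add_cancel (Nat.one_le_iff_ne_zero.2 (pow_pos hp.pos l).ne')]
    exact iterate_cf p hp x l hl D
  · rw [eq_top_iff]
    intro E _
    obtain ⟨u, rfl⟩ := end_eq_sum b x hb E
    refine Subalgebra.sum_mem _ fun m _ => ?_
    rw [← Module.End.mul_eq_comp]
    exact mul_mem (Algebra.subset_adjoin (Or.inl ⟨u m, rfl⟩))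
      (dd_mem_adjoin b x hp hb (m : ℕ) m.isLt)
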